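/- Let V be a finite-dimensional vector space over a field, n = dim V, and let T be a set of linear automorphisms of V. Then there exist at most n² elements g₁, …, g_{n²} ∈ T such that every line (one-dimensional subspace) of V invariant under all of g₁, …, g_{n²} is invariant under every element of T. -/

import Mathlib

theorem stmt_2 (F : Type*) [Field F] (V : Type*) [AddCommGroup V] [Module F V]
    [FiniteDimensional F V] (n : ℕ) (hn : n = Module.finrank F V)
    (T : Set (V ≃ₗ[F] V)) :
    ∃ S : Finset (V ≃ₗ[F] V), ↑S ⊆ T ∧ S.card ≤ n ^ 2 ∧
      ∀ ℓ : Submodule F V, Module.finrank F ℓ = 1 →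
        (∀ g ∈ S, ℓ.map (g : V →ₗ[F] V) = ℓ) →
        ∀ g ∈ T, ℓ.map (g : V →ₗ[F] V) = ℓ := by
  classical
  set φ : (V ≃ₗ[F] V) → Module.End F V := fun g => (g : V →ₗ[F] V) with hφ
  set d : Finset (V ≃ₗ[F] V) → ℕ := fun S =>
    Module.finrank F (Subalgebra.toSubmodule (Algebra.adjoin F (φ '' (S : Set (V ≃ₗ[F] V)))))
    with hd
  -- the ambient space of endomorphisms has dimension n²
  have hEnd : Module.finrank F (Module.End F V) = n ^ 2 :=
    (Module.finrank_linearMap ..).trans (by rw [← hn, sq])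
  have hdle : ∀ S, d S ≤ n ^ 2 := fun S => hEnd ▸ Submodule.finrank_le _
  have hdmono : ∀ S S' : Finset (V ≃ₗ[F] V), S ⊆ S' → d S ≤ d S' := by
    intro S S' hSS
    apply Submodule.finrank_mono
    exact Algebra.adjoin_mono (Set.image_mono (by exact_mod_cast hSS))
  -- the set of achievable dimensions
  set A : Set ℕ := {k | ∃ S : Finset (V ≃ₗ[F] V), ↑S ⊆ T ∧
    (S = ∅ ∨ S.card + d ∅ ≤ d S) ∧ d S = k} with hA
  have hA0 : d ∅ ∈ A := ⟨∅, by simp, Or.inl rfl, rfl⟩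
  have hAbdd : BddAbove A := ⟨n ^ 2, fun k ⟨S, _, _, hk⟩ => hk ▸ hdle S⟩
  obtain ⟨S, hST, hScard, hSd⟩ : sSup A ∈ A := Nat.sSup_mem ⟨_, hA0⟩ hAbdd
  -- maximality: adjoining any t ∈ T doesn't increase the dimension, so
  -- every t ∈ T already lies in the adjoined algebra
  have hmax : ∀ t ∈ T, φ t ∈ Algebra.adjoin F (φ '' (S : Set (V ≃ₗ[F] V))) := by
    intro t ht
    by_contra hnot
    have htS : t ∉ S := fun h => hnot (Algebra.subset_adjoin ⟨t, by exact_mod_cast h, rfl⟩)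
    set S' := insert t S with hS'
    have hlt : d S < d S' := by
      apply Submodule.finrank_lt_finrank_of_lt
      apply lt_of_le_of_ne
      · exact Subalgebra.toSubmodule.monotone
          (Algebra.adjoin_mono (Set.image_mono (by
            intro x hx; exact Finset.mem_coe.mpr (Finset.mem_insert_of_mem hx))))
      · intro heq
        apply hnot
        have : φ t ∈ Algebra.adjoin F (φ '' (S' : Set (V ≃ₗ[F] V))) :=
          Algebra.subset_adjoin ⟨t, by simp [hS'], rfl⟩
        rw [show Algebra.adjoin F (φ '' (S' : Set (V ≃ₗ[F] V))) =
            Algebra.adjoin F (φ '' (S : Set (V ≃ₗ[F] V))) from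
          Subalgebra.toSubmodule_injective heq.symm] at this
        exact this
    have hcard' : S'.card + d ∅ ≤ d S' := by
      rw [Finset.card_insert_of_notMem htS]
      rcases hScard with h | h
      · subst h
        have := hlt
        simp only [Finset.card_empty] at *
        omega
      · omega
    have : d S' ∈ A := ⟨S', by
        intro x hx
        rcases Finset.mem_insert.mp (by exact_mod_cast hx) with h | h
        · exact h ▸ ht
        · exact hST (Finset.mem_coe.mpr h), Or.inr hcard', rfl⟩
    have := le_csSup hAbdd this
    omega
  refine ⟨S, hST, ?_, ?_⟩
  · -- cardinality bound
    rcases hScard with h | h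
    · simp [h]
    · rcases Nat.eq_zero_or_pos n with hn0 | hn0
      · -- V is trivial
        have : d S ≤ 0 := by simpa [hn0] using hdle S
        omega
      · -- d ∅ ≥ 1 since 1 ≠ 0 in End V
        have h1 : 0 < d ∅ := by
          rw [hd]
          apply Module.finrank_pos_iff.mpr
          have hV : Nontrivial V := by
            rw [← Module.finrank_pos_iff (R := F)]
            omega
          have h1mem : (1 : Module.End F V) ∈
              Subalgebra.toSubmodule (Algebra.adjoin F (φ '' ((∅ : Finset (V ≃ₗ[F] V)) : Set (V ≃ₗ[F] V)))) :=
            (Subalgebra.mem_toSubmodule _).mpr (Subalgebra.one_mem _)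
          exact ⟨⟨(1 : Module.End F V), h1mem⟩, 0, by
            intro heq
            have : (1 : Module.End F V) = 0 := by
              simpa using congrArg Subtype.val heq
            obtain ⟨v, hv⟩ := exists_ne (0 : V)
            exact hv (by simpa using congrFun (congrArg DFunLike.coe this) v)⟩
        have := hdle S
        omega
  · -- invariance
    intro ℓ hℓ hinv g hg
    -- the stabilizer subalgebra of ℓ
    set W : Subalgebra F (Module.End F V) :=
      { carrier := {f | ∀ x ∈ ℓ, f x ∈ ℓ}
        mul_mem' := fun hf hg x hx => hf _ (hg x hx)
        one_mem' := fun x hx => hx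
        add_mem' := fun hf hg x hx => ℓ.add_mem (hf x hx) (hg x hx)
        zero_mem' := fun x _ => ℓ.zero_mem
        algebraMap_mem' := fun c x hx => ℓ.smul_mem c hx } with hW
    have hadj : Algebra.adjoin F (φ '' (S : Set (V ≃ₗ[F] V))) ≤ W := by
      apply Algebra.adjoin_le
      rintro _ ⟨s, hs, rfl⟩
      intro x hx
      have := hinv s (by exact_mod_cast hs)
      rw [← this]
      exact Submodule.mem_map_of_mem hx
    have hgW : φ g ∈ W := hadj (hmax g hg)
    have hle : ℓ.map (g : V →ₗ[F] V) ≤ ℓ := by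
      rintro _ ⟨x, hx, rfl⟩
      exact hgW x hx
    have heqrank : Module.finrank F (ℓ.map (g : V →ₗ[F] V)) = Module.finrank F ℓ :=
      LinearEquiv.finrank_map_eq g ℓ
    exact Submodule.eq_of_le_of_finrank_le hle (by rw [heqrank])
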